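/- Let h be a positive integer and let a, b, c, d be integers with 1 ≤ a, b, c, d ≤ h−1. Then the two conditions min{a,b} + min{c,d} > h and max{a,c} + max{b,d} < h cannot hold simultaneously. Moreover, if Q = conv{(a,0), (0,b), (h,h−c), (h−d,h)} satisfies max{a,c} + max{b,d} < h, then Q is lattice-equivalent to a quadrilateral conv{(a′,0), (0,b′), (h,h−c′), (h−d′,h)} with integers a′, b′, c′, d′ ∈ [1, h−1] satisfying min{a′,b′} + min{c′,d′} > h. -/

import Mathlib

open Set MeasureTheory Pointwise

/-- A plane convex body: a compact convex subset of ℝ² with nonempty interior. -/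
def IsPlaneConvexBody (P : Set (Fin 2 → ℝ)) : Prop :=
  IsCompact P ∧ Convex ℝ P ∧ (interior P).Nonempty

/-- The width of `P` in the direction `u`. -/
noncomputable def width (P : Set (Fin 2 → ℝ)) (u : Fin 2 → ℝ) : ℝ :=
  sSup ((fun p => u 0 * p 0 + u 1 * p 1) '' P) -
    sInf ((fun p => u 0 * p 0 + u 1 * p 1) '' P)

/-- An affine unimodular transformation: multiplication by an integer matrix with
determinant `±1` followed by a translation by an integer vector. -/
def IsUnimodularMap (φ : (Fin 2 → ℝ) → (Fin 2 → ℝ)) : Prop :=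
  ∃ (A : Matrix (Fin 2) (Fin 2) ℤ) (t : Fin 2 → ℤ),
    (A.det = 1 ∨ A.det = -1) ∧
    ∀ x, φ x = (A.map (Int.cast : ℤ → ℝ)).mulVec x + fun i => (t i : ℝ)

/-- Two subsets of ℝ² are lattice-equivalent if one is the image of the other
under an affine unimodular transformation. -/
def LatticeEquivalent (P Q : Set (Fin 2 → ℝ)) : Prop :=
  ∃ φ, IsUnimodularMap φ ∧ Q = φ '' P

/-- The `l`-dilate of the unit square, `[0,l]²`. -/
def squareDilate (l : ℝ) : Set (Fin 2 → ℝ) :=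
  {x | ∀ i, x i ∈ Set.Icc 0 l}

/-- The `l`-dilate of the standard 2-simplex. -/
def simplexDilate (l : ℝ) : Set (Fin 2 → ℝ) :=
  {x | 0 ≤ x 0 ∧ 0 ≤ x 1 ∧ x 0 + x 1 ≤ l}

/-- The lattice size of `P` with respect to the unit square. -/
noncomputable def lsSquare (P : Set (Fin 2 → ℝ)) : ℝ :=
  sInf {l : ℝ | 0 ≤ l ∧ ∃ φ, IsUnimodularMap φ ∧ φ '' P ⊆ squareDilate l}

/-- The lattice size of `P` with respect to the standard simplex. -/
noncomputable def lsDelta (P : Set (Fin 2 → ℝ)) : ℝ :=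
  sInf {l : ℝ | 0 ≤ l ∧ ∃ φ, IsUnimodularMap φ ∧ φ '' P ⊆ simplexDilate l}

/-- The lattice width of `P`: the minimum of `width P u` over primitive integer
directions `u`. -/
noncomputable def latticeWidth (P : Set (Fin 2 → ℝ)) : ℝ :=
  sInf {w : ℝ | ∃ u : Fin 2 → ℤ, Int.gcd (u 0) (u 1) = 1 ∧
    w = width P (fun i => (u i : ℝ))}

/-- A lattice polygon: the convex hull of a (nonempty) finite set of points of ℤ². -/
def IsLatticePolygon (P : Set (Fin 2 → ℝ)) : Prop :=
  ∃ S : Finset (Fin 2 → ℤ), S.Nonempty ∧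
    P = convexHull ℝ ((fun p : Fin 2 → ℤ => fun i => (p i : ℝ)) '' (S : Set (Fin 2 → ℤ)))

/-- The area of a plane set: its two-dimensional Lebesgue measure. -/
noncomputable def area (P : Set (Fin 2 → ℝ)) : ℝ :=
  (volume P).toReal

lemma aux_image_convexHull (M : Matrix (Fin 2) (Fin 2) ℝ) (t : Fin 2 → ℝ)
    (s : Set (Fin 2 → ℝ)) :
    (fun x => M.mulVec x + t) '' (convexHull ℝ s)
      = convexHull ℝ ((fun x => M.mulVec x + t) '' s) := by
  let f : (Fin 2 → ℝ) →ᵃ[ℝ] (Fin 2 → ℝ) :=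
    { toFun := fun x => M.mulVec x + t
      linear := M.mulVecLin
      map_vadd' := by
        intro p v
        simp [Matrix.mulVec_add, vadd_eq_add]
        abel_nf
        exact ⟨trivial, trivial⟩ }
  exact f.image_convexHull s

/-- For integers `1 ≤ a, b, c, d ≤ h-1`, the conditions `min{a,b}+min{c,d} > h` and
`max{a,c}+max{b,d} < h` cannot hold simultaneously; moreover if the quadrilateral
`Q = conv{(a,0),(0,b),(h,h-c),(h-d,h)}` satisfies the second condition then it is
lattice-equivalent to a quadrilateral of the same shape satisfying the first. -/
theorem stmt16 (h a b c d : ℤ) (hh : 0 < h)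
    (ha1 : 1 ≤ a) (ha2 : a ≤ h - 1) (hb1 : 1 ≤ b) (hb2 : b ≤ h - 1)
    (hc1 : 1 ≤ c) (hc2 : c ≤ h - 1) (hd1 : 1 ≤ d) (hd2 : d ≤ h - 1) :
    ¬(h < min a b + min c d ∧ max a c + max b d < h) ∧
    (max a c + max b d < h →
      ∃ a' b' c' d' : ℤ, 1 ≤ a' ∧ a' ≤ h - 1 ∧ 1 ≤ b' ∧ b' ≤ h - 1 ∧
        1 ≤ c' ∧ c' ≤ h - 1 ∧ 1 ≤ d' ∧ d' ≤ h - 1 ∧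
        h < min a' b' + min c' d' ∧
        LatticeEquivalent
          (convexHull ℝ
            {(![(a : ℝ), 0] : Fin 2 → ℝ), ![0, (b : ℝ)],
              ![(h : ℝ), ((h - c : ℤ) : ℝ)], ![((h - d : ℤ) : ℝ), (h : ℝ)]})
          (convexHull ℝ
            {(![(a' : ℝ), 0] : Fin 2 → ℝ), ![0, (b' : ℝ)],
              ![(h : ℝ), ((h - c' : ℤ) : ℝ)], ![((h - d' : ℤ) : ℝ), (h : ℝ)]})) := by
  constructor
  · omega
  · intro hmax
    refine ⟨h - d, h - b, h - c, h - a, by omega, by omega, by omega, by omega,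
      by omega, by omega, by omega, by omega, by omega, ?_⟩
    set A : Matrix (Fin 2) (Fin 2) ℤ := !![1, 0; 0, -1] with hA
    set t : Fin 2 → ℤ := ![0, h] with ht
    set M : Matrix (Fin 2) (Fin 2) ℝ := (A.map (Int.cast : ℤ → ℝ)) with hM
    refine ⟨fun x => M.mulVec x + fun i => (t i : ℝ), ⟨A, t, ?_, fun x => rfl⟩, ?_⟩
    · right
      simp [hA, Matrix.det_fin_two_of]
    · rw [aux_image_convexHull]
      congr 1
      have e1 : M.mulVec ![(a : ℝ), 0] + (fun i => (t i : ℝ))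
          = ![((h - (h - a) : ℤ) : ℝ), (h : ℝ)] := by
        funext i
        fin_cases i <;>
          simp [hM, hA, ht, Matrix.mulVec, dotProduct, Fin.sum_univ_two] <;>
          push_cast <;> ring
      have e2 : M.mulVec ![0, (b : ℝ)] + (fun i => (t i : ℝ))
          = ![0, ((h - b : ℤ) : ℝ)] := by
        funext i
        fin_cases i <;>
          simp [hM, hA, ht, Matrix.mulVec, dotProduct, Fin.sum_univ_two] <;>
          push_cast <;> ring
      have e3 : M.mulVec ![(h : ℝ), ((h - c : ℤ) : ℝ)] + (fun i => (t i : ℝ))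
          = ![(h : ℝ), ((h - (h - c) : ℤ) : ℝ)] := by
        funext i
        fin_cases i <;>
          simp [hM, hA, ht, Matrix.mulVec, dotProduct, Fin.sum_univ_two] <;>
          push_cast <;> ring
      have e4 : M.mulVec ![((h - d : ℤ) : ℝ), (h : ℝ)] + (fun i => (t i : ℝ))
          = ![((h - d : ℤ) : ℝ), 0] := by
        funext i
        fin_cases i <;>
          simp [hM, hA, ht, Matrix.mulVec, dotProduct, Fin.sum_univ_two] <;>
          push_cast <;> ring
      rw [Set.image_insert_eq, Set.image_insert_eq, Set.image_insert_eq,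
        Set.image_singleton, e1, e2, e3, e4]
      ext x
      simp only [Set.mem_insert_iff, Set.mem_singleton_iff]
      tauto
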